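/- For every x ∈ ℝ and y ≥ 0: as α → 0⁺, v_α(x,y) converges to y·∑_{j=1}^{m_p+1} K_{j−1} e^{r_{j−1}(x−b*)} if x < b*, and to (x−c)·y if x ≥ b*; moreover, as α → ∞, v_α(x,y) converges to 0. -/

import Mathlib

open Finset Matrix MeasureTheory

/-- The (i,j) cofactor of a square matrix: (−1)^(i+j) times the determinant of the
submatrix obtained by deleting row `i` and column `j`. -/
noncomputable def cof {n : ℕ} (M : Matrix (Fin (n + 1)) (Fin (n + 1)) ℝ)
    (i j : Fin (n + 1)) : ℝ :=
  (-1 : ℝ) ^ ((i : ℕ) + (j : ℕ)) * (M.submatrix i.succAbove j.succAbove).det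
section AuxAlg
open Polynomial

lemma auxL1 (s : Finset ℕ) (v : ℕ → ℝ) (hvs : Set.InjOn v s)
    (f : ℝ[X]) (hf : f.degree < s.card) :
    ∑ i ∈ s, f.eval (v i) * Lagrange.nodalWeight s v i = f.coeff (s.card - 1) := by
  have hfi := Lagrange.eq_interpolate hvs hf
  have hcoeff : ∀ i ∈ s, (Lagrange.basis s v i).coeff (s.card - 1) = Lagrange.nodalWeight s v i := by
    intro i hi
    rw [Lagrange.basis_eq_prod_sub_inv_mul_nodal_div hi, ← Lagrange.nodal_erase_eq_nodal_div hi,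
      coeff_C_mul]
    have h1 : (Lagrange.nodal (s.erase i) v).natDegree = s.card - 1 := by
      rw [Lagrange.natDegree_nodal, Finset.card_erase_of_mem hi]
    rw [← h1, Lagrange.nodal_monic.coeff_natDegree, mul_one]
  conv_rhs => rw [hfi, Lagrange.interpolate_apply, finset_sum_coeff]
  refine Finset.sum_congr rfl fun i hi => ?_
  rw [coeff_C_mul, hcoeff i hi]

lemma auxDivX (f : ℝ[X]) (x : ℝ) :
    f.eval x = f.coeff 0 + f.coeff 1 * x + (f.divX.divX).eval x * x ^ 2 := by
  conv_lhs => rw [← f.divX_mul_X_add]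
  conv_lhs => rw [← f.divX.divX_mul_X_add]
  simp [coeff_divX]
  ring

lemma auxCof {n : ℕ} (A : Matrix (Fin (n+1)) (Fin (n+1)) ℝ) (j : Fin (n+1)) :
    cramer A (Pi.single 0 1) j = cof A 0 j := by
  rw [Matrix.cramer_apply, Matrix.det_succ_column _ j]
  rw [Finset.sum_eq_single 0]
  · have hsub : (A.updateCol j (Pi.single 0 1)).submatrix (0 : Fin (n+1)).succAbove j.succAbove
        = A.submatrix (0 : Fin (n+1)).succAbove j.succAbove := by
      ext i' j'
      simp only [Matrix.submatrix_apply, Matrix.updateCol_apply]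
      rw [if_neg (Fin.succAbove_ne j j')]
    rw [hsub, Matrix.updateCol_self, cof]
    simp
  · intro i _ hi
    rw [Matrix.updateCol_self, Pi.single_eq_of_ne hi]
    ring
  · intro h; exact absurd (Finset.mem_univ 0) h

lemma sumK (mp : ℕ) (hmp : 1 ≤ mp) (βp r : ℕ → ℝ) (c : ℝ)
    (hβpos : ∀ i ∈ Finset.Icc 1 mp, 0 < βp i)
    (hrpos : ∀ j ∈ Finset.range (mp + 1), 0 < r j)
    (hrinj : Set.InjOn r (Finset.range (mp + 1)))
    (hrβ : ∀ j ∈ Finset.range (mp + 1), ∀ i ∈ Finset.Icc 1 mp, r j ≠ βp i)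
    (A : Matrix (Fin (mp + 1)) (Fin (mp + 1)) ℝ)
    (hA : ∀ i j : Fin (mp + 1), A i j = if (i : ℕ) = 0 then 1 else βp i / (βp i - r j))
    (hdet : A.det ≠ 0)
    (R : ℝ)
    (hR : R = (∏ k ∈ Finset.range (mp + 1), r k) / ∏ k ∈ Finset.Icc 1 mp, βp k)
    (K : ℕ → ℝ)
    (hK : ∀ j : Fin (mp + 1), K j = R * cof A 0 j / ((r j) ^ 2 * A.det))
    (b : ℝ)
    (hb : b = c + (∑ i ∈ Finset.range (mp + 1), 1 / r i) - ∑ i ∈ Finset.Icc 1 mp, 1 / βp i) :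
    ∑ j ∈ Finset.range (mp + 1), K j = b - c := by
  classical
  set sN := Finset.range (mp + 1) with hsN
  set sB := Finset.Icc 1 mp with hsB
  have hcardN : sN.card = mp + 1 := Finset.card_range _
  have hcardB : sB.card = mp := by rw [hsB, Nat.card_Icc]; omega
  have hrne : ∀ j ∈ sN, r j ≠ 0 := fun j hj => ne_of_gt (hrpos j hj)
  set Q : ℝ[X] := Lagrange.nodal sB βp with hQ
  set W : ℝ[X] := Lagrange.nodal sN r with hW
  set w : ℕ → ℝ := Lagrange.nodalWeight sN r with hw
  have hQdeg : Q.natDegree = mp := by rw [hQ, Lagrange.natDegree_nodal, hcardB]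
  have hWdeg : W.natDegree = mp + 1 := by rw [hW, Lagrange.natDegree_nodal, hcardN]
  -- the L1 instance
  have L1 : ∀ f : ℝ[X], f.degree < mp + 1 →
      ∑ j ∈ sN, f.eval (r j) * w j = f.coeff mp := by
    intro f hf
    have := auxL1 sN r hrinj f (by rw [hcardN]; exact_mod_cast hf)
    rwa [hcardN] at this
  -- step 1 : A.mulVec t = R • e0 where t j = K j * r j ^ 2
  set t : Fin (mp + 1) → ℝ := fun j => K j * r j ^ 2 with ht
  have htc : t = (R / A.det) • cramer A (Pi.single 0 1) := by
    funext j
    have hrj : r (j : ℕ) ≠ 0 := hrne _ (by rw [hsN]; exact Finset.mem_range.mpr j.isLt)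
    rw [ht]
    simp only [Pi.smul_apply, smul_eq_mul]
    rw [hK j, auxCof A j]
    field_simp
  have hstep1 : A.mulVec t = R • (Pi.single 0 1 : Fin (mp+1) → ℝ) := by
    rw [htc, Matrix.mulVec_smul, Matrix.mulVec_cramer, smul_smul, div_mul_cancel₀ _ hdet]
  -- step 2 : explicit solution
  set sV : Fin (mp + 1) → ℝ := fun j => R * (Q.eval (r (j : ℕ)) * w (j : ℕ)) with hsV
  have hQmem : ∀ j : Fin (mp + 1), (j : ℕ) ∈ sN := by
    intro j; rw [hsN]; exact Finset.mem_range.mpr j.isLt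
  have hQcoeff : Q.coeff mp = 1 := by
    have := (Lagrange.nodal_monic (s := sB) (v := βp)).coeff_natDegree
    rwa [hQdeg] at this
  have hQdegree : Q.degree < (mp : WithBot ℕ) + 1 := by
    rw [hQ, Lagrange.degree_nodal, hcardB]
    exact_mod_cast Nat.lt_succ_self mp
  have hstep2 : A.mulVec sV = R • (Pi.single 0 1 : Fin (mp+1) → ℝ) := by
    funext i
    rw [Matrix.mulVec, dotProduct]
    by_cases h0 : (i : ℕ) = 0
    · have hi0 : i = 0 := Fin.ext h0
      subst hi0
      have hrow : ∀ j : Fin (mp + 1), A 0 j * sV j = R * (Q.eval (r (j:ℕ)) * w (j:ℕ)) := by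
        intro j; rw [hA 0 j]; simp [hsV]
      rw [Finset.sum_congr rfl (fun j _ => hrow j)]
      rw [Fin.sum_univ_eq_sum_range (fun j => R * (Q.eval (r j) * w j)) (mp + 1)]
      rw [← Finset.mul_sum, ← hsN, L1 Q hQdegree, hQcoeff]
      simp
    · set Qi : ℝ[X] := Lagrange.nodal (sB.erase (i : ℕ)) βp with hQi
      have hiB : (i : ℕ) ∈ sB := by
        rw [hsB]; exact Finset.mem_Icc.mpr ⟨Nat.one_le_iff_ne_zero.mpr h0, by omega⟩
      have hrow : ∀ j : Fin (mp + 1), A i j * sV j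
          = (-(R * βp (i:ℕ))) * (Qi.eval (r (j:ℕ)) * w (j:ℕ)) := by
        intro j
        have hjN := hQmem j
        have hsplit : Q.eval (r (j:ℕ)) = (r (j:ℕ) - βp (i:ℕ)) * Qi.eval (r (j:ℕ)) := by
          rw [hQ, Lagrange.eval_nodal, hQi, Lagrange.eval_nodal,
            ← Finset.mul_prod_erase sB _ hiB]
        have hne : βp (i:ℕ) - r (j:ℕ) ≠ 0 :=
          sub_ne_zero_of_ne (Ne.symm (hrβ _ hjN _ hiB))
        simp only [hsV]
        rw [hA i j, if_neg h0, hsplit]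
        field_simp
        ring
      rw [Finset.sum_congr rfl (fun j _ => hrow j)]
      rw [Fin.sum_univ_eq_sum_range (fun j => (-(R * βp (i:ℕ))) * (Qi.eval (r j) * w j)) (mp + 1)]
      rw [← Finset.mul_sum, ← hsN]
      have hQidegree : Qi.degree < (mp : WithBot ℕ) + 1 := by
        rw [hQi, Lagrange.degree_nodal, Finset.card_erase_of_mem hiB, hcardB]
        exact_mod_cast by
          have : (mp - 1 : ℕ) < mp + 1 := by omega
          exact_mod_cast this
      rw [L1 Qi hQidegree]
      have hQicoeff : Qi.coeff mp = 0 := by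
        apply Polynomial.coeff_eq_zero_of_natDegree_lt
        rw [hQi, Lagrange.natDegree_nodal, Finset.card_erase_of_mem hiB, hcardB]
        omega
      rw [hQicoeff, mul_zero]
      have : i ≠ 0 := fun h => h0 (by rw [h]; rfl)
      simp [Pi.single_eq_of_ne this]
  -- step 3 : t = sV
  have h3 : t = sV := by
    have h := hstep1.trans hstep2.symm
    have h2 := congrArg (fun u => A⁻¹.mulVec u) h
    simpa [Matrix.mulVec_mulVec, Matrix.nonsing_inv_mul A (Ne.isUnit hdet),
      Matrix.one_mulVec] using h2
  have hKj : ∀ j ∈ sN, K j = R * (Q.eval (r j) * w j) / r j ^ 2 := by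
    intro j hj
    have hj' : j < mp + 1 := by rw [hsN] at hj; exact Finset.mem_range.mp hj
    have heq := congrFun h3 ⟨j, hj'⟩
    simp only [ht, hsV] at heq
    have hrj : r j ≠ 0 := hrne j hj
    rw [eq_div_iff (pow_ne_zero 2 hrj)]
    exact heq
  -- step 4 : compute the sum
  set q0 : ℝ := Q.coeff 0 with hq0
  set q1 : ℝ := Q.coeff 1 with hq1
  set d0 : ℝ := W.coeff 0 with hd0
  set d1 : ℝ := W.coeff 1 with hd1
  set Sr : ℝ := ∑ i ∈ sN, 1 / r i with hSr
  set Sβ : ℝ := ∑ i ∈ sB, 1 / βp i with hSβ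
  have hq0v : q0 = ∏ i ∈ sB, (0 - βp i) := by
    rw [hq0, Polynomial.coeff_zero_eq_eval_zero, hQ, Lagrange.eval_nodal]
  have hd0v : d0 = ∏ j ∈ sN, (0 - r j) := by
    rw [hd0, Polynomial.coeff_zero_eq_eval_zero, hW, Lagrange.eval_nodal]
  have hq0ne : q0 ≠ 0 := by
    rw [hq0v]
    exact Finset.prod_ne_zero_iff.mpr fun i hi => by
      have := hβpos i hi; intro h; nlinarith
  have hd0ne : d0 ≠ 0 := by
    rw [hd0v]
    exact Finset.prod_ne_zero_iff.mpr fun i hi => by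
      have := hrpos i hi; intro h; nlinarith
  have hcoeff1 : ∀ (s : Finset ℕ) (v : ℕ → ℝ),
      (Lagrange.nodal s v).coeff 1 = ∑ i ∈ s, ∏ k ∈ s.erase i, (0 - v k) := by
    intro s v
    have h1 : (Lagrange.nodal s v).coeff 1
        = (Polynomial.derivative (Lagrange.nodal s v)).coeff 0 := by
      rw [Polynomial.coeff_derivative]; push_cast; ring
    rw [h1, Polynomial.coeff_zero_eq_eval_zero, Lagrange.derivative_nodal,
      Polynomial.eval_finset_sum]
    exact Finset.sum_congr rfl fun i _ => by rw [Lagrange.eval_nodal]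
  have hq1v : q1 = -q0 * Sβ := by
    rw [hq1, hQ, hcoeff1, hSβ, Finset.mul_sum]
    refine Finset.sum_congr rfl fun i hi => ?_
    have hβi : βp i ≠ 0 := ne_of_gt (hβpos i hi)
    have hsp : q0 = (0 - βp i) * ∏ k ∈ sB.erase i, (0 - βp k) := by
      rw [hq0v]; exact (Finset.mul_prod_erase sB (fun k => (0:ℝ) - βp k) hi).symm
    rw [hsp]
    field_simp
    ring
  have hd1v : d1 = -d0 * Sr := by
    rw [hd1, hW, hcoeff1, hSr, Finset.mul_sum]
    refine Finset.sum_congr rfl fun i hi => ?_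
    have hri : r i ≠ 0 := hrne i hi
    have hsp : d0 = (0 - r i) * ∏ k ∈ sN.erase i, (0 - r k) := by
      rw [hd0v]; exact (Finset.mul_prod_erase sN (fun k => (0:ℝ) - r k) hi).symm
    rw [hsp]
    field_simp
    ring
  -- degree bounds
  have hWne : W ≠ 0 := Lagrange.nodal_ne_zero
  have hWdegree : W.degree = ((mp + 1 : ℕ) : WithBot ℕ) := by
    rw [hW, Lagrange.degree_nodal, hcardN]
  have hdegW1 : W.divX.degree < (mp : WithBot ℕ) + 1 := by
    have h := Polynomial.degree_divX_lt hWne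
    rw [hWdegree] at h
    exact lt_of_lt_of_le h (by exact_mod_cast le_refl (mp + 1))
  have hdivle : ∀ f : ℝ[X], (Polynomial.divX f).degree ≤ f.degree := by
    intro f
    by_cases h : f = 0
    · simp [h]
    · exact (Polynomial.degree_divX_lt h).le
  have hdegW2 : W.divX.divX.degree < (mp : WithBot ℕ) + 1 :=
    lt_of_le_of_lt (hdivle _) hdegW1
  have hdegQ2 : Q.divX.divX.degree < (mp : WithBot ℕ) + 1 :=
    lt_of_le_of_lt (hdivle _) (lt_of_le_of_lt (hdivle _) hQdegree)
  have hWz : ∀ j ∈ sN, W.eval (r j) = 0 := by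
    intro j hj
    rw [hW]
    exact Lagrange.eval_nodal_at_node hj
  -- S1
  have hW1coeff : W.divX.coeff mp = 1 := by
    rw [Polynomial.coeff_divX]
    have h := (Lagrange.nodal_monic (s := sN) (v := r)).coeff_natDegree
    rwa [hWdeg] at h
  have heach : ∀ j ∈ sN, w j / r j = -(W.divX.eval (r j) * w j) / d0 := by
    intro j hj
    have hrj : r j ≠ 0 := hrne j hj
    have h0 : W.divX.eval (r j) * r j + d0 = 0 := by
      have h := hWz j hj
      conv_lhs at h => rw [← W.divX_mul_X_add]
      rw [Polynomial.eval_add, Polynomial.eval_mul, Polynomial.eval_X,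
        Polynomial.eval_C] at h
      rw [← hd0] at h
      exact h
    have hWe : W.divX.eval (r j) = -d0 / r j := by
      rw [eq_div_iff hrj]; linarith
    rw [hWe]
    field_simp
  have hS1 : ∑ j ∈ sN, w j / r j = -1 / d0 := by
    have h : ∑ j ∈ sN, w j / r j = (∑ j ∈ sN, -(W.divX.eval (r j) * w j)) / d0 := by
      rw [Finset.sum_div]
      exact Finset.sum_congr rfl heach
    have h2 : ∑ j ∈ sN, -(W.divX.eval (r j) * w j)
        = -∑ j ∈ sN, W.divX.eval (r j) * w j := by
      rw [← Finset.sum_neg_distrib]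
    rw [h, h2, L1 _ hdegW1, hW1coeff]
  -- S2
  have hW2c : W.divX.divX.coeff mp = 0 := by
    rw [Polynomial.coeff_divX, Polynomial.coeff_divX]
    exact Polynomial.coeff_eq_zero_of_natDegree_lt (by rw [hWdeg]; omega)
  have heach2 : ∀ j ∈ sN, w j / r j ^ 2
      = (-d1 * (w j / r j) - W.divX.divX.eval (r j) * w j) / d0 := by
    intro j hj
    have hrj : r j ≠ 0 := hrne j hj
    have hzero : d0 + d1 * r j + W.divX.divX.eval (r j) * r j ^ 2 = 0 := by
      have h := auxDivX W (r j)
      rw [hWz j hj, ← hd0, ← hd1] at h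
      linarith
    have hW2e : W.divX.divX.eval (r j) = (-d0 - d1 * r j) / r j ^ 2 := by
      rw [eq_div_iff (pow_ne_zero 2 hrj)]; linarith
    rw [hW2e]
    field_simp
    ring
  have hS2 : ∑ j ∈ sN, w j / r j ^ 2 = d1 / d0 ^ 2 := by
    have h : ∑ j ∈ sN, w j / r j ^ 2
        = ((∑ j ∈ sN, -d1 * (w j / r j)) - ∑ j ∈ sN, W.divX.divX.eval (r j) * w j) / d0 := by
      rw [← Finset.sum_sub_distrib, Finset.sum_div]
      exact Finset.sum_congr rfl heach2
    rw [h, ← Finset.mul_sum, hS1, L1 _ hdegW2, hW2c]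
    field_simp
    ring
  -- main sum
  have hQ2c : Q.divX.divX.coeff mp = 0 := by
    rw [Polynomial.coeff_divX, Polynomial.coeff_divX]
    exact Polynomial.coeff_eq_zero_of_natDegree_lt (by rw [hQdeg]; omega)
  have heach3 : ∀ j ∈ sN, K j
      = R * (q0 * (w j / r j ^ 2) + q1 * (w j / r j) + Q.divX.divX.eval (r j) * w j) := by
    intro j hj
    have hrj : r j ≠ 0 := hrne j hj
    rw [hKj j hj]
    have h := auxDivX Q (r j)
    rw [← hq0, ← hq1] at h
    rw [h]
    field_simp
  have htotal : ∑ j ∈ sN, K j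
      = R * (q0 * (d1 / d0 ^ 2) + q1 * (-1 / d0) + 0) := by
    rw [Finset.sum_congr rfl heach3, ← Finset.mul_sum]
    congr 1
    rw [Finset.sum_add_distrib, Finset.sum_add_distrib, ← Finset.mul_sum, ← Finset.mul_sum,
      hS1, hS2, L1 _ hdegQ2, hQ2c]
  -- final arithmetic
  have hq0p : q0 = (-1 : ℝ) ^ mp * ∏ i ∈ sB, βp i := by
    rw [hq0v, ← hcardB, ← Finset.prod_const (-1 : ℝ), ← Finset.prod_mul_distrib]
    exact Finset.prod_congr rfl fun i _ => by ring
  have hd0p : d0 = (-1 : ℝ) ^ (mp + 1) * ∏ j ∈ sN, r j := by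
    rw [hd0v, ← hcardN, ← Finset.prod_const (-1 : ℝ), ← Finset.prod_mul_distrib]
    exact Finset.prod_congr rfl fun i _ => by ring
  have hBne : (∏ i ∈ sB, βp i) ≠ 0 :=
    Finset.prod_ne_zero_iff.mpr fun i hi => ne_of_gt (hβpos i hi)
  have hPne : (∏ j ∈ sN, r j) ≠ 0 :=
    Finset.prod_ne_zero_iff.mpr fun j hj => ne_of_gt (hrpos j hj)
  have hEne : ((-1 : ℝ) ^ mp) ≠ 0 := pow_ne_zero _ (by norm_num)
  rw [htotal, hq1v, hd1v, hb, hR, hq0p, hd0p, hSr, hSβ, pow_succ]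
  field_simp
  ring


end AuxAlg

section AuxAna
open Filter Real Set

lemma auxSlope : Tendsto (fun u : ℝ => (Real.exp u - 1) / u) (nhdsWithin 0 {0}ᶜ) (nhds 1) := by
  have h := Real.hasDerivAt_exp 0
  rw [hasDerivAt_iff_tendsto_slope] at h
  simp only [slope_fun_def, Real.exp_zero, sub_zero, vsub_eq_sub, smul_eq_mul] at h
  refine h.congr fun u => ?_
  rw [div_eq_inv_mul]

lemma auxLim0 {r y : ℝ} (hr : 0 < r) (hy : 0 < y) :
    Tendsto (fun a : ℝ => (1 - Real.exp (-(a * r * y))) / (a * r))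
      (nhdsWithin 0 (Set.Ioi 0)) (nhds y) := by
  have hcomp : Tendsto (fun a : ℝ => -(a * r * y)) (nhdsWithin 0 (Set.Ioi 0))
      (nhdsWithin 0 {0}ᶜ) := by
    rw [tendsto_nhdsWithin_iff]
    constructor
    · have hc : Continuous fun a : ℝ => -(a * r * y) := by continuity
      have h0 := hc.tendsto 0
      norm_num at h0
      exact h0.mono_left nhdsWithin_le_nhds
    · filter_upwards [self_mem_nhdsWithin] with a ha
      have : 0 < a := ha
      simp only [Set.mem_compl_iff, Set.mem_singleton_iff]
      intro hcon
      nlinarith [mul_pos (mul_pos this hr) hy]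
  have h1 : Tendsto (fun a : ℝ => (Real.exp (-(a * r * y)) - 1) / (-(a * r * y)))
      (nhdsWithin 0 (Set.Ioi 0)) (nhds 1) := auxSlope.comp hcomp
  have h2 := h1.const_mul y
  rw [mul_one] at h2
  refine h2.congr' ?_
  filter_upwards [self_mem_nhdsWithin] with a ha
  have ha' : (0:ℝ) < a := ha
  have : a * r ≠ 0 := by positivity
  field_simp
  ring

lemma auxLimTop (r y c0 : ℝ) (hr : 0 < r) (hy : 0 < y) :
    Tendsto (fun a : ℝ => (1 - Real.exp (c0 - a * r * y)) / (a * r)) atTop (nhds 0) := by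
  have hnum : Tendsto (fun a : ℝ => 1 - Real.exp (c0 - a * r * y)) atTop (nhds 1) := by
    have hlin : Tendsto (fun a : ℝ => c0 - a * r * y) atTop atBot := by
      have h1 : Tendsto (fun a : ℝ => a * (r * y)) atTop atTop :=
        Tendsto.atTop_mul_const (by positivity) tendsto_id
      have h2 := tendsto_neg_atTop_atBot.comp h1
      have h3 := tendsto_atBot_add_const_left atTop c0 h2
      refine h3.congr fun a => by simp [Function.comp]; ring
    have := Real.tendsto_exp_atBot.comp hlin
    simpa using (tendsto_const_nhds (x := (1:ℝ))).sub this
  have hden : Tendsto (fun a : ℝ => a * r) atTop atTop :=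
    Tendsto.atTop_mul_const hr tendsto_id
  exact hnum.div_atTop hden


end AuxAna

theorem stmt19 (σ μ ρ lamn lamp c : ℝ)
    (hσ : 0 < σ) (hρ : 0 < ρ) (hlamn : 0 < lamn) (hlamp : 0 < lamp) (hc : 0 < c)
    (mp mn : ℕ) (hmp : 1 ≤ mp) (hmn : 1 ≤ mn)
    (ωp βp ωn βn : ℕ → ℝ)
    (hωp : ∀ k, 1 ≤ k → k ≤ mp → 0 < ωp k)
    (hωpsum : ∑ k ∈ Finset.Icc 1 mp, ωp k = 1)
    (hβp1 : 0 < βp 1)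
    (hβpmono : ∀ k, 1 ≤ k → k < mp → βp k < βp (k + 1))
    (hωn : ∀ k, 1 ≤ k → k ≤ mn → 0 < ωn k)
    (hωnsum : ∑ k ∈ Finset.Icc 1 mn, ωn k = 1)
    (hβn1 : 0 < βn 1)
    (hβnmono : ∀ k, 1 ≤ k → k < mn → βn k < βn (k + 1))
    (r : ℕ → ℝ)
    (hroot : ∀ j, j ≤ mp →
      σ ^ 2 * (r j) ^ 2 / 2 + μ * r j - (ρ + lamn + lamp)
        + lamp * ∑ i ∈ Finset.Icc 1 mp, ωp i * βp i / (βp i - r j)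
        + lamn * ∑ i ∈ Finset.Icc 1 mn, ωn i * βn i / (r j + βn i) = 0)
    (hr0 : 0 < r 0)
    (hinter : ∀ k, 1 ≤ k → k ≤ mp → r (k - 1) < βp k ∧ βp k < r k)
    (A : Matrix (Fin (mp + 1)) (Fin (mp + 1)) ℝ)
    (hA : ∀ i j : Fin (mp + 1), A i j = if (i : ℕ) = 0 then 1 else βp i / (βp i - r j))
    (hdet : A.det ≠ 0)
    (R : ℝ)
    (hR : R = (∏ k ∈ Finset.range (mp + 1), r k) / ∏ k ∈ Finset.Icc 1 mp, βp k)
    (K : ℕ → ℝ)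
    (hK : ∀ j : Fin (mp + 1), K j = R * cof A 0 j / ((r j) ^ 2 * A.det))
    (b : ℝ)
    (hb : b = c + (∑ i ∈ Finset.range (mp + 1), 1 / r i) - ∑ i ∈ Finset.Icc 1 mp, 1 / βp i)
    (V : ℝ → ℝ → ℝ → ℝ)
    (hV : ∀ a : ℝ, 0 < a → ∀ x y : ℝ,
      V a x y =
        if x < b then
          ∑ j ∈ Finset.range (mp + 1),
            K j / (a * r j) * (1 - Real.exp (-(a * r j * y))) * Real.exp (r j * (x - b))
        else if x < a * y + b then
          (∑ j ∈ Finset.range (mp + 1),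
            K j / (a * r j) * (1 - Real.exp (-(a * r j * (y - (x - b) / a)))))
            + ((x - c) ^ 2 - (b - c) ^ 2) / (2 * a)
        else (x - c) * y - a * y ^ 2 / 2)
    :
    ∀ x y : ℝ, 0 ≤ y →
      (x < b →
        Filter.Tendsto (fun a => V a x y) (nhdsWithin 0 (Set.Ioi 0))
          (nhds (y * ∑ j ∈ Finset.range (mp + 1), K j * Real.exp (r j * (x - b))))) ∧
      (b ≤ x →
        Filter.Tendsto (fun a => V a x y) (nhdsWithin 0 (Set.Ioi 0))
          (nhds ((x - c) * y))) ∧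
      Filter.Tendsto (fun a => V a x y) Filter.atTop (nhds 0) := by
  intro x y hy
  -- basic order facts
  have hβle : ∀ j, j ≤ mp → ∀ i, 1 ≤ i → i ≤ j → βp i ≤ βp j := by
    intro j
    induction j with
    | zero => intro _ i h1 h2; omega
    | succ n ih =>
      intro hj i h1 h2
      rcases Nat.eq_or_lt_of_le h2 with he | hl
      · rw [he]
      · have hin : i ≤ n := by omega
        have h3 : βp i ≤ βp n := ih (by omega) i h1 hin
        have h4 : βp n < βp (n + 1) := hβpmono n (by omega) (by omega)
        linarith
  have hβpos : ∀ i, 1 ≤ i → i ≤ mp → 0 < βp i := by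
    intro i h1 h2
    exact lt_of_lt_of_le hβp1 (hβle i h2 1 le_rfl h1)
  have hβr : ∀ j i, j ≤ mp → 1 ≤ i → i ≤ j → βp i < r j := by
    intro j i hj hi hij
    exact lt_of_le_of_lt (hβle j hj i hi hij) (hinter j (le_trans hi hij) hj).2
  have hrβ2 : ∀ j i, 1 ≤ i → i ≤ mp → j < i → r j < βp i := by
    intro j i hi himp hji
    have h1 : r j < βp (j + 1) := by
      have := (hinter (j + 1) (by omega) (by omega)).1
      simpa using this
    exact lt_of_lt_of_le h1 (hβle i himp (j + 1) (by omega) (by omega))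
  have hrpos' : ∀ j, j ≤ mp → 0 < r j := by
    intro j hj
    rcases Nat.eq_zero_or_pos j with h | h
    · rw [h]; exact hr0
    · exact lt_trans (hβpos j h hj) (hinter j h hj).2
  have hrmono : ∀ j k, j < k → k ≤ mp → r j < r k := by
    intro j k hjk hk
    have h1 : r j < βp (j + 1) := by
      have := (hinter (j + 1) (by omega) (by omega)).1
      simpa using this
    have h2 : βp (j + 1) ≤ βp k := hβle k hk (j + 1) (by omega) (by omega)
    exact lt_of_lt_of_le h1 (le_trans h2 (le_of_lt (hinter k (by omega) hk).2))
  have hrinj : Set.InjOn r (Finset.range (mp + 1)) := by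
    intro a ha b hb hab
    simp only [Finset.coe_range, Set.mem_Iio] at ha hb
    by_contra hne
    rcases lt_or_gt_of_ne hne with h | h
    · exact absurd hab (ne_of_lt (hrmono a b h (by omega)))
    · exact absurd hab.symm (ne_of_lt (hrmono b a h (by omega)))
  have hrβne : ∀ j ∈ Finset.range (mp + 1), ∀ i ∈ Finset.Icc 1 mp, r j ≠ βp i := by
    intro j hj i hi
    rw [Finset.mem_range] at hj
    rw [Finset.mem_Icc] at hi
    rcases Nat.lt_or_ge j i with h | h
    · exact ne_of_lt (hrβ2 j i hi.1 hi.2 h)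
    · exact (ne_of_lt (hβr j i (by omega) hi.1 h)).symm
  have key : ∑ j ∈ Finset.range (mp + 1), K j = b - c :=
    sumK mp hmp βp r c
      (fun i hi => hβpos i (Finset.mem_Icc.mp hi).1 (Finset.mem_Icc.mp hi).2)
      (fun j hj => hrpos' j (by have := Finset.mem_range.mp hj; omega))
      hrinj hrβne A hA hdet R hR K hK b hb
  have hrposm : ∀ j ∈ Finset.range (mp + 1), 0 < r j :=
    fun j hj => hrpos' j (by have := Finset.mem_range.mp hj; omega)
  -- case y = 0
  rcases eq_or_lt_of_le hy with hy0 | hy'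
  · have hy0 : y = 0 := hy0.symm
    subst hy0
    have hV0 : ∀ a : ℝ, 0 < a → V a x 0 = 0 := by
      intro a ha
      rw [hV a ha]
      split_ifs with h1 h2
      · simp
      · exfalso; rw [mul_zero, zero_add] at h2; exact h1 h2
      · ring
    have hnhds : Filter.Tendsto (fun a => V a x 0) (nhdsWithin 0 (Set.Ioi 0)) (nhds 0) := by
      refine Filter.Tendsto.congr' ?_ tendsto_const_nhds
      filter_upwards [self_mem_nhdsWithin] with a ha
      exact (hV0 a ha).symm
    have htop : Filter.Tendsto (fun a => V a x 0) Filter.atTop (nhds 0) := by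
      refine Filter.Tendsto.congr' ?_ tendsto_const_nhds
      filter_upwards [Filter.eventually_gt_atTop 0] with a ha
      exact (hV0 a ha).symm
    refine ⟨fun _ => by simpa using hnhds, fun _ => by simpa using hnhds, htop⟩
  refine ⟨?_, ?_, ?_⟩
  -- Part 1 : x < b, a → 0⁺
  · intro hxb
    have hterm : ∀ j ∈ Finset.range (mp + 1),
        Filter.Tendsto (fun a : ℝ => (K j * Real.exp (r j * (x - b)))
            * ((1 - Real.exp (-(a * r j * y))) / (a * r j)))
          (nhdsWithin 0 (Set.Ioi 0)) (nhds (K j * Real.exp (r j * (x - b)) * y)) :=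
      fun j hj => (auxLim0 (hrposm j hj) hy').const_mul _
    have hsum := tendsto_finset_sum _ hterm
    rw [show (∑ j ∈ Finset.range (mp + 1), K j * Real.exp (r j * (x - b)) * y)
        = y * ∑ j ∈ Finset.range (mp + 1), K j * Real.exp (r j * (x - b)) by
      rw [← Finset.sum_mul]; ring] at hsum
    refine Filter.Tendsto.congr' ?_ hsum
    filter_upwards [self_mem_nhdsWithin] with a ha
    rw [hV a ha, if_pos hxb]
    exact Finset.sum_congr rfl fun j _ => by ring
  -- Part 2 : b ≤ x, a → 0⁺
  · intro hbx
    rcases eq_or_lt_of_le hbx with heq | hlt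
    · subst heq
      have hterm : ∀ j ∈ Finset.range (mp + 1),
          Filter.Tendsto (fun a : ℝ => K j * ((1 - Real.exp (-(a * r j * y))) / (a * r j)))
            (nhdsWithin 0 (Set.Ioi 0)) (nhds (K j * y)) :=
        fun j hj => (auxLim0 (hrposm j hj) hy').const_mul _
      have hsum := tendsto_finset_sum _ hterm
      rw [show (∑ j ∈ Finset.range (mp + 1), K j * y) = (b - c) * y by
        rw [← Finset.sum_mul, key]] at hsum
      refine Filter.Tendsto.congr' ?_ hsum
      filter_upwards [self_mem_nhdsWithin] with a ha
      have ha' : (0 : ℝ) < a := ha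
      rw [hV a ha', if_neg (lt_irrefl b), if_pos (by nlinarith : b < a * y + b)]
      simp only [sub_self, zero_div, sub_zero, add_zero]
      exact Finset.sum_congr rfl fun j _ => by ring
    · have hlim : Filter.Tendsto (fun a : ℝ => (x - c) * y - a * y ^ 2 / 2)
          (nhdsWithin 0 (Set.Ioi 0)) (nhds ((x - c) * y)) := by
        have h2 : Filter.Tendsto (fun a : ℝ => a * y ^ 2 / 2) (nhds 0) (nhds 0) := by
          have hc : Continuous fun a : ℝ => a * y ^ 2 / 2 :=
            (continuous_id.mul continuous_const).div_const 2
          have := hc.tendsto 0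
          norm_num at this
          exact this
        have hcst : Filter.Tendsto (fun _ : ℝ => (x - c) * y)
            (nhdsWithin 0 (Set.Ioi 0)) (nhds ((x - c) * y)) := tendsto_const_nhds
        have := hcst.sub (h2.mono_left nhdsWithin_le_nhds)
        simpa using this
      refine Filter.Tendsto.congr' ?_ hlim
      have hmem : Set.Ioo (0 : ℝ) ((x - b) / y) ∈ nhdsWithin 0 (Set.Ioi 0) :=
        Ioo_mem_nhdsGT_of_mem (Set.left_mem_Ico.mpr (div_pos (by linarith) hy'))
      filter_upwards [hmem] with a ha
      have ha0 : (0 : ℝ) < a := ha.1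
      have hay : a * y + b ≤ x := by
        have := (lt_div_iff₀ hy').mp ha.2
        linarith
      rw [hV a ha0, if_neg (not_lt.mpr hbx), if_neg (not_lt.mpr hay)]
  -- Part 3 : a → ∞
  · by_cases hxb : x < b
    · have hterm : ∀ j ∈ Finset.range (mp + 1),
          Filter.Tendsto (fun a : ℝ => (K j * Real.exp (r j * (x - b)))
              * ((1 - Real.exp ((0 : ℝ) - a * r j * y)) / (a * r j)))
            Filter.atTop (nhds (K j * Real.exp (r j * (x - b)) * 0)) :=
        fun j hj => (auxLimTop (r j) y 0 (hrposm j hj) hy').const_mul _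
      have hsum := tendsto_finset_sum _ hterm
      rw [show (∑ j ∈ Finset.range (mp + 1), K j * Real.exp (r j * (x - b)) * 0) = (0:ℝ) by
        simp] at hsum
      refine Filter.Tendsto.congr' ?_ hsum
      filter_upwards [Filter.eventually_gt_atTop 0] with a ha
      rw [hV a ha, if_pos hxb]
      refine Finset.sum_congr rfl fun j _ => ?_
      rw [zero_sub]
      ring
    · have hbx : b ≤ x := not_lt.mp hxb
      have hterm : ∀ j ∈ Finset.range (mp + 1),
          Filter.Tendsto (fun a : ℝ => K j
              * ((1 - Real.exp (r j * (x - b) - a * r j * y)) / (a * r j)))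
            Filter.atTop (nhds (K j * 0)) :=
        fun j hj => (auxLimTop (r j) y (r j * (x - b)) (hrposm j hj) hy').const_mul _
      have hsum := tendsto_finset_sum _ hterm
      have hlast : Filter.Tendsto (fun a : ℝ => ((x - c) ^ 2 - (b - c) ^ 2) / (2 * a))
          Filter.atTop (nhds 0) :=
        Filter.Tendsto.div_atTop tendsto_const_nhds
          (Filter.Tendsto.const_mul_atTop (by norm_num) Filter.tendsto_id)
      have htot := hsum.add hlast
      rw [show ((∑ j ∈ Finset.range (mp + 1), K j * 0) + (0:ℝ)) = (0:ℝ) by simp] at htot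
      refine Filter.Tendsto.congr' ?_ htot
      filter_upwards [Filter.eventually_gt_atTop (max 0 ((x - b) / y))] with a ha
      have ha0 : (0 : ℝ) < a := lt_of_le_of_lt (le_max_left _ _) ha
      have hxlt : x < a * y + b := by
        have h1 : (x - b) / y < a := lt_of_le_of_lt (le_max_right _ _) ha
        have := (div_lt_iff₀ hy').mp h1
        linarith
      rw [hV a ha0, if_neg hxb, if_pos hxlt]
      congr 1
      refine Finset.sum_congr rfl fun j _ => ?_
      have hexp : -(a * r j * (y - (x - b) / a)) = r j * (x - b) - a * r j * y := by
        field_simp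
        ring
      rw [hexp]
      ring
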